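/- Let f(t) = t^m − ∑_{i=0}^{m-1} a_i t^i ∈ R = D[t;σ,δ] with m > 1 and let c ∈ D. Then the following are equivalent: (1) c is semi-invariant with respect to f, i.e. fc ∈ Df; (2) c ∈ L = Nuc_r(S_f) ∩ D; (3) σ^m(c)·a_k = ∑_{j=k}^{m-1} a_j·Δ_{j,k}(c) − Δ_{m,k}(c) for all k ∈ {0,1,…,m−1}. -/

import Mathlib

/-- `g` right-divides `f`, i.e. `f ∈ Rg`. -/
def RDvd {R : Type} [Ring R] (g f : R) : Prop := ∃ q : R, f = q * g

/-- `f` is right-invariant : `f·R ⊆ R·f`. -/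
def RightInvariant {R : Type} [Ring R] (f : R) : Prop := ∀ r : R, ∃ q : R, f * r = q * f

/-- `(f, g)_r = 1`: the only common right divisors of `f` and `g` are units. -/
def RightCoprimeWith {R : Type} [Ring R] (f g : R) : Prop :=
  ∀ e : R, RDvd e f → RDvd e g → IsUnit e

/-- `f` and `g` are similar: `R/Rf ≅ R/Rg` as left `R`-modules. -/
def SimilarP {R : Type} [Ring R] (f g : R) : Prop :=
  Nonempty ((R ⧸ (Submodule.span R {f})) ≃ₗ[R] (R ⧸ (Submodule.span R {g})))

/-- `b` is a bound of `f`: `b` is right-invariant, `f` right-divides `b`, and `Rb` is the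
largest two-sided ideal contained in `Rf`. -/
def IsBound {R : Type} [Ring R] (f b : R) : Prop :=
  b ≠ 0 ∧ RightInvariant b ∧ RDvd f b ∧
    ∀ g : R, g ≠ 0 → RightInvariant g → RDvd f g → RDvd b g

/-- Data witnessing that the ring `R` is a skew polynomial ring `D[t;sigma,delta]`:
`iota` embeds the coefficients, `t` is the indeterminate with `t*a = sigma(a)*t + delta(a)`,
every element has a unique finite coefficient representation, and `rmod g f` is the
remainder of `g` upon right division by `f`. -/
structure SkewPolyData (D : Type) [DivisionRing D] (σ : D →+* D) (δ : D → D)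
    (R : Type) [Ring R] where
  ι : D →+* R
  t : R
  coeff : R → (ℕ →₀ D)
  rmod : R → R → R
  t_mul : ∀ a : D, t * ι a = ι (σ a) * t + ι (δ a)
  sum_coeff : ∀ x : R, ((coeff x).sum fun i a => ι a * t ^ i) = x
  coeff_sum : ∀ c : ℕ →₀ D, coeff (c.sum fun i a => ι a * t ^ i) = c
  rmod_spec : ∀ g f : R, f ≠ 0 →
    (∃ q : R, g = q * f + rmod g f) ∧
      (coeff (rmod g f)).support.max < (coeff f).support.max

namespace SkewPolyData

variable {D : Type} [DivisionRing D] {σ : D →+* D} {δ : D → D}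
variable {R : Type} [Ring R] (S : SkewPolyData D σ δ R)

/-- The degree of a skew polynomial (`⊥` for `0`). -/
noncomputable def deg (x : R) : WithBot ℕ := (S.coeff x).support.max

/-- `f` is monic of degree `m`. -/
def MonicDeg (f : R) (m : ℕ) : Prop := S.coeff f m = 1 ∧ S.deg f = (m : WithBot ℕ)

/-- `f` is irreducible in `R`: it is non-constant and is not a product of two
polynomials of strictly smaller degree. -/
def Irred (f : R) : Prop :=
  (1 : WithBot ℕ) ≤ S.deg f ∧
    ∀ g h : R, f = g * h → S.deg g < S.deg f → S.deg h < S.deg f → False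

/-- multiplication in the Petit algebra `S_f` (on representatives in `R`). -/
def pmul (f a b : R) : R := S.rmod (a * b) f

/-- the underlying set of the Petit algebra `S_f`: polynomials of degree `< deg f`. -/
def carr (f : R) : Set R := {x : R | S.deg x < S.deg f}

/-- the right nucleus of the Petit algebra `S_f`. -/
def NucR (f : R) : Set R :=
  {x : R | x ∈ S.carr f ∧ ∀ a ∈ S.carr f, ∀ b ∈ S.carr f,
    S.pmul f (S.pmul f a b) x = S.pmul f a (S.pmul f b x)}

/-- the nucleus (left ∩ middle ∩ right) of the Petit algebra `S_f`. -/
def NucAll (f : R) : Set R :=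
  {x : R | x ∈ S.carr f ∧
    (∀ a ∈ S.carr f, ∀ b ∈ S.carr f,
      S.pmul f (S.pmul f x a) b = S.pmul f x (S.pmul f a b)) ∧
    (∀ a ∈ S.carr f, ∀ b ∈ S.carr f,
      S.pmul f (S.pmul f a x) b = S.pmul f a (S.pmul f x b)) ∧
    (∀ a ∈ S.carr f, ∀ b ∈ S.carr f,
      S.pmul f (S.pmul f a b) x = S.pmul f a (S.pmul f b x))}

/-- the eigenring `E(f)` of `f`, as the set of its canonical representatives
(polynomials of degree `< deg f` with `f·g ∈ Rf`), with multiplication `pmul f`. -/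
def EigR (f : R) : Set R :=
  {x : R | S.deg x < S.deg f ∧ ∃ q : R, f * x = q * f}

/-- evaluation of a polynomial with coefficients in the subfield `K` of `D`
at the (central) element `x₀` of `R`. -/
noncomputable def ceval (K : Subfield D) (x₀ : R) (p : Polynomial K) : R :=
  Polynomial.eval₂ (S.ι.comp K.subtype) x₀ p

/-- `h = p(x₀)` is the minimal central left multiple of `f`: `p ∈ K[x]` is monic of
minimal degree such that `f` right-divides `p(x₀)`, and `h = p(x₀)`. -/
def IsMclm (K : Subfield D) (x₀ : R) (f h : R) (p : Polynomial K) : Prop :=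
  p.Monic ∧ h = S.ceval K x₀ p ∧ RDvd f h ∧
    ∀ q : Polynomial K, q.Monic → RDvd f (S.ceval K x₀ q) → p.degree ≤ q.degree

/-- the subset `X` of `R` has a basis of size `N` over the set of coefficients `Fc ⊆ D`. -/
def RelDimR (Fc : Set D) (X : Set R) (N : ℕ) : Prop :=
  ∃ b : Fin N → R, (∀ i, b i ∈ X) ∧
    ∀ x ∈ X, ∃! cf : Fin N → D, (∀ i, cf i ∈ Fc) ∧ x = ∑ i, S.ι (cf i) * b i

/-- `ψ` restricts to an isomorphism of the subset `X` of the Petit algebra `S_f`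
(with multiplication `∘_f`) onto the ring `B`. -/
def SubMulIso (f : R) (X : Set R) (B : Type) [Ring B] (ψ : R → B) : Prop :=
  Set.BijOn ψ X Set.univ ∧ ψ 1 = 1 ∧
    ∀ x ∈ X, ∀ y ∈ X,
      ψ (x + y) = ψ x + ψ y ∧ ψ (S.pmul f x y) = ψ x * ψ y

end SkewPolyData

/-- the subset `X ⊆ D` has a basis of size `N` over the set of coefficients `Fc ⊆ D`. -/
def RelDimD {D : Type} [DivisionRing D] (Fc X : Set D) (N : ℕ) : Prop :=
  ∃ b : Fin N → D, (∀ i, b i ∈ X) ∧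
    ∀ x ∈ X, ∃! cf : Fin N → D, (∀ i, cf i ∈ Fc) ∧ x = ∑ i, cf i * b i

theorem deltaZero {D : Type} [DivisionRing D] {δ : D → D}
    (hadd : ∀ x y : D, δ (x + y) = δ x + δ y) : δ 0 = 0 := by
  have h := hadd 0 0
  rw [add_zero] at h
  exact left_eq_add.mp h

theorem deltaOne {D : Type} [DivisionRing D] {σ : D →+* D} {δ : D → D}
    (hleib : ∀ x y : D, δ (x * y) = σ x * δ y + δ x * y) : δ 1 = 0 := by
  have h := hleib 1 1
  rw [mul_one, map_one, one_mul, mul_one] at h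
  exact left_eq_add.mp h

/-- the subfield `F = C ∩ Fix(σ) ∩ Const(δ)` of `D`. -/
def ctrSubfield {D : Type} [DivisionRing D] (σ : D →+* D) (δ : D → D)
    (hadd : ∀ x y : D, δ (x + y) = δ x + δ y)
    (hleib : ∀ x y : D, δ (x * y) = σ x * δ y + δ x * y) : Subfield D where
  carrier := {a : D | a ∈ Set.center D ∧ σ a = a ∧ δ a = 0}
  zero_mem' := ⟨Set.zero_mem_center, map_zero σ, deltaZero hadd⟩
  one_mem' := ⟨Set.one_mem_center, map_one σ, deltaOne (σ := σ) hleib⟩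
  add_mem' := fun ha hb =>
    ⟨Set.add_mem_center ha.1 hb.1, by rw [map_add, ha.2.1, hb.2.1],
      by rw [hadd, ha.2.2, hb.2.2, add_zero]⟩
  mul_mem' := fun ha hb =>
    ⟨Set.mul_mem_center ha.1 hb.1, by rw [map_mul, ha.2.1, hb.2.1],
      by rw [hleib, ha.2.2, hb.2.2, mul_zero, zero_mul, add_zero]⟩
  neg_mem' := fun {a} ha => by
    refine ⟨Set.neg_mem_center ha.1, by rw [map_neg, ha.2.1], ?_⟩
    have h := hadd a (-a)
    rw [add_neg_cancel, deltaZero hadd, ha.2.2, zero_add] at h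
    exact h.symm
  inv_mem' := fun a ha => by
    refine ⟨Set.inv_mem_center ha.1, by rw [map_inv₀, ha.2.1], ?_⟩
    by_cases h : a = 0
    · rw [h, inv_zero]; exact deltaZero hadd
    · have hl := hleib a a⁻¹
      rw [mul_inv_cancel₀ h, deltaOne (σ := σ) hleib, ha.2.2, zero_mul, add_zero] at hl
      rcases mul_eq_zero.mp hl.symm with h1 | h2
      · exact absurd (σ.injective (by rw [h1, map_zero])) h
      · exact h2


/-- `B` is a central algebra of degree `s` over the quotient `K[x]/(P)`:
there is a homomorphism `χ : K[x] →+* B` with kernel `(P)` whose range is the center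
of `B`, and `B` has a basis of size `s²` over the center, with coefficients
unique modulo `P`. -/
def IsCentralAlgModOfDeg {K : Type} [DivisionRing K] (P : Polynomial K)
    (B : Type) [Ring B] (s : ℕ) : Prop :=
  ∃ χ : Polynomial K →+* B, (∀ q : Polynomial K, χ q = 0 ↔ P ∣ q) ∧
    Set.range ⇑χ = Set.center B ∧
    ∃ bb : Fin (s * s) → B, ∀ x : B,
      ∃ cf : Fin (s * s) → Polynomial K, x = ∑ i, χ (cf i) * bb i ∧
        ∀ cf' : Fin (s * s) → Polynomial K,
          x = ∑ i, χ (cf' i) * bb i → ∀ i, P ∣ (cf i - cf' i)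

/-- `B` is a (finite-dimensional) central simple algebra over the field `K`. -/
def CentralSimpleOver (K : Type) [DivisionRing K] (B : Type) [Ring B] : Prop :=
  IsSimpleRing B ∧ ∃ χ : K →+* B, Function.Injective ⇑χ ∧ Set.range ⇑χ = Set.center B ∧
    ∃ (N : ℕ) (bb : Fin N → B), ∀ x : B, ∃! cf : Fin N → K, x = ∑ i, χ (cf i) * bb i

/-- The maps `Δ_{j,i}` associated with `(σ, δ)`. -/
def Delta {D : Type} [DivisionRing D] (σ : D →+* D) (δ : D → D) : ℕ → ℕ → D → D
  | 0, 0 => id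
  | 0, _ + 1 => fun _ => 0
  | j + 1, 0 => fun a => δ (Delta σ δ j 0 a)
  | j + 1, i + 1 => fun a => δ (Delta σ δ j (i + 1) a) + σ (Delta σ δ j i a)

/-- `χ` realises an isomorphism from the commutative quotient `K[x]/(P)` onto the
subset `X` of the Petit algebra `S_f` (with multiplication `∘_f`). -/
def QuotMulIso {D : Type} [DivisionRing D] {σ : D →+* D} {δ : D → D} {R : Type} [Ring R]
    (S : SkewPolyData D σ δ R) (f : R) (X : Set R) (K : Subfield D)
    (P : Polynomial ↥K) (χ : Polynomial ↥K → R) : Prop :=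
  (∀ q, χ q ∈ X) ∧ χ 1 = 1 ∧ (∀ q r, χ (q + r) = χ q + χ r) ∧
    (∀ q r, χ (q * r) = S.pmul f (χ q) (χ r)) ∧
    (∀ x ∈ X, ∃ q, χ q = x) ∧ (∀ q, χ q = 0 ↔ P ∣ q)

/-- A description of the right nucleus of the Petit algebra `S_f` as a central division
algebra `B` of degree `s` over `E = K[x]/(P)`, together with a ring isomorphism
`R/Rh ≅ M_k(Nuc_r(S_f))` (given by a surjective ring homomorphism with kernel `Rh`). -/
structure NucCDADesc {D : Type} [DivisionRing D] {σ : D →+* D} {δ : D → D}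
    {R : Type} [Ring R] (S : SkewPolyData D σ δ R)
    (f h : R) (K : Subfield D) (P : Polynomial ↥K) (s k : ℕ) where
  B : Type
  [instB : DivisionRing B]
  ψ : R → B
  hψ : S.SubMulIso f (S.NucR f) B ψ
  hcda : IsCentralAlgModOfDeg P B s
  Φ : R →+* Matrix (Fin k) (Fin k) B
  hΦ : Function.Surjective ⇑Φ
  hker : ∀ x : R, Φ x = 0 ↔ ∃ q : R, x = q * h

/-- A description of the eigenring of an irreducible divisor `g` of `h` as a central
division algebra `B` of degree `sp` over `E = K[x]/(P)`, with `R/Rh ≅ M_k(B)` and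
`Nuc_r(S_f) ≅ M_l(B)` a central simple algebra of degree `l·sp` over `E`. -/
structure EigCDADesc {D : Type} [DivisionRing D] {σ : D →+* D} {δ : D → D}
    {R : Type} [Ring R] (S : SkewPolyData D σ δ R)
    (f h g : R) (K : Subfield D) (P : Polynomial ↥K) (l k sp : ℕ) where
  B : Type
  [instB : DivisionRing B]
  ψg : R → B
  hψg : S.SubMulIso g (S.EigR g) B ψg
  hcda : IsCentralAlgModOfDeg P B sp
  Φ : R →+* Matrix (Fin k) (Fin k) B
  hΦ : Function.Surjective ⇑Φ
  hker : ∀ x : R, Φ x = 0 ↔ ∃ q : R, x = q * h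
  ψ : R → Matrix (Fin l) (Fin l) B
  hψ : S.SubMulIso f (S.NucR f) (Matrix (Fin l) (Fin l) B) ψ
  hcsa : IsCentralAlgModOfDeg P (Matrix (Fin l) (Fin l) B) (l * sp)
  hsimple : IsSimpleRing (Matrix (Fin l) (Fin l) B)

/-- A description of the eigenring of `f` as a central simple algebra over the field `K`. -/
structure CSADesc {D : Type} [DivisionRing D] {σ : D →+* D} {δ : D → D}
    {R : Type} [Ring R] (S : SkewPolyData D σ δ R) (f : R) (K : Subfield D) where
  B : Type
  [instB : Ring B]
  ψ : R → B
  hψ : S.SubMulIso f (S.EigR f) B ψ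
  hcsa : CentralSimpleOver ↥K B

/-- A description of `R/Rh` as a semisimple Artinian ring, direct sum of the simple
Artinian rings `R/Rπᵢ`, of the decomposition of `R/Rf` into simple modules, and of
the right nucleus of `S_f` as `⊕ᵢ M_{rsᵢ}(E(fiᵢ))`. -/
structure SemisimpleDesc {D : Type} [DivisionRing D] {σ : D →+* D} {δ : D → D}
    {R : Type} [Ring R] (S : SkewPolyData D σ δ R)
    (f h : R) (z : ℕ) (π : Fin z → R) (fi : Fin z → R) (rs : Fin z → ℕ) where
  A : Fin z → Type
  [instA : ∀ i, Ring (A i)]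
  φ : ∀ i, R →+* A i
  hφsurj : ∀ i, Function.Surjective ⇑(φ i)
  hφker : ∀ i, ∀ x : R, φ i x = 0 ↔ ∃ q : R, x = q * π i
  hsimpleA : ∀ i, IsSimpleRing (A i)
  hartA : ∀ i, IsArtinianRing (A i)
  hss : IsSemisimpleRing ((i : Fin z) → A i)
  hart : IsArtinianRing ((i : Fin z) → A i)
  hPisurj : Function.Surjective ⇑(Pi.ringHom φ)
  hPiker : ∀ x : R, Pi.ringHom φ x = 0 ↔ ∃ q : R, x = q * h
  modIso : (R ⧸ (Submodule.span R {f})) ≃ₗ[R]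
      ((i : Fin z) → Fin (rs i) → (R ⧸ (Submodule.span R {fi i})))
  B : Fin z → Type
  [instB : ∀ i, Ring (B i)]
  ψg : ∀ i, R → B i
  hψg : ∀ i, S.SubMulIso (fi i) (S.EigR (fi i)) (B i) (ψg i)
  Ψ : R → ((i : Fin z) → Matrix (Fin (rs i)) (Fin (rs i)) (B i))
  hΨ : S.SubMulIso f (S.NucR f) ((i : Fin z) → Matrix (Fin (rs i)) (Fin (rs i)) (B i)) Ψ
  hssNuc : IsSemisimpleRing ((i : Fin z) → Matrix (Fin (rs i)) (Fin (rs i)) (B i))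
  hartNuc : IsArtinianRing ((i : Fin z) → Matrix (Fin (rs i)) (Fin (rs i)) (B i))

/-- the subfield `F = C ∩ Fix(σ)` of `D` (for `δ = 0`). -/
def fixC {D : Type} [DivisionRing D] (σ : D →+* D) : Subfield D :=
  ctrSubfield σ (fun _ => 0) (fun _ _ => by simp) (fun _ _ => by simp)

/-- the subfield `F = C ∩ Const(δ)` of `D` (for `σ = id`). -/
def constC {D : Type} [DivisionRing D] (δ : D → D)
    (hadd : ∀ x y : D, δ (x + y) = δ x + δ y)
    (hleib : ∀ x y : D, δ (x * y) = x * δ y + δ x * y) : Subfield D :=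
  ctrSubfield (RingHom.id D) δ hadd (fun x y => by simpa using hleib x y)

section SkAux

variable {D : Type} [DivisionRing D] {σ : D →+* D} {δ : D → D}

theorem skDelta_zero_of_lt (hδadd : ∀ x y : D, δ (x + y) = δ x + δ y) :
    ∀ j i : ℕ, j < i → ∀ a : D, Delta σ δ j i a = 0 := by
  intro j
  induction j with
  | zero =>
    intro i hi a
    cases i with
    | zero => omega
    | succ i => rfl
  | succ j ih =>
    intro i hi a
    cases i with
    | zero => omega
    | succ i =>
      show δ (Delta σ δ j (i + 1) a) + σ (Delta σ δ j i a) = 0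
      rw [ih (i + 1) (by omega) a, ih i (by omega) a, deltaZero hδadd, map_zero, add_zero]

theorem skDelta_diag (hδadd : ∀ x y : D, δ (x + y) = δ x + δ y) :
    ∀ j : ℕ, ∀ a : D, Delta σ δ j j a = (⇑σ)^[j] a := by
  intro j
  induction j with
  | zero => intro a; rfl
  | succ j ih =>
    intro a
    show δ (Delta σ δ j (j + 1) a) + σ (Delta σ δ j j a) = _
    rw [skDelta_zero_of_lt hδadd j (j + 1) (by omega) a, deltaZero hδadd, zero_add, ih a,
      Function.iterate_succ_apply']

variable {R : Type} [Ring R] (S : SkewPolyData D σ δ R)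

theorem sk_coeff_monomial (a : D) (i : ℕ) :
    S.coeff (S.ι a * S.t ^ i) = Finsupp.single i a := by
  have h : (Finsupp.single i a).sum (fun i a => S.ι a * S.t ^ i) = S.ι a * S.t ^ i :=
    Finsupp.sum_single_index (by simp)
  rw [← h, S.coeff_sum]

theorem sk_coeff_add (x y : R) : S.coeff (x + y) = S.coeff x + S.coeff y := by
  have h : ((S.coeff x + S.coeff y).sum fun i a => S.ι a * S.t ^ i) = x + y := by
    rw [Finsupp.sum_add_index' (fun i => by simp) (fun i b c => by rw [map_add, add_mul]),
      S.sum_coeff x, S.sum_coeff y]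
  rw [← h, S.coeff_sum]

theorem sk_coeff_zero : S.coeff (0 : R) = 0 := by
  have h : (0 : R) = S.ι 0 * S.t ^ 0 := by simp
  rw [h, sk_coeff_monomial, Finsupp.single_zero]

theorem sk_coeff_sub (x y : R) : S.coeff (x - y) = S.coeff x - S.coeff y := by
  have h := sk_coeff_add S (x - y) y
  rw [sub_add_cancel] at h
  exact eq_sub_of_add_eq h.symm

theorem sk_coeff_inj {x y : R} (h : S.coeff x = S.coeff y) : x = y := by
  rw [← S.sum_coeff x, ← S.sum_coeff y, h]

/-- coefficient form: the polynomial with coefficients `b 0, …, b (n-1)`. -/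
def skCform (b : ℕ → D) (n : ℕ) : R := ∑ i ∈ Finset.range n, S.ι (b i) * S.t ^ i

theorem sk_coeff_cform (b : ℕ → D) (n : ℕ) (k : ℕ) :
    S.coeff (skCform S b n) k = if k < n then b k else 0 := by
  induction n with
  | zero => simp [skCform, sk_coeff_zero]
  | succ n ih =>
    have h : skCform S b (n + 1) = skCform S b n + S.ι (b n) * S.t ^ n :=
      Finset.sum_range_succ _ n
    rw [h, sk_coeff_add, sk_coeff_monomial, Finsupp.add_apply, Finsupp.single_apply, ih]
    by_cases h1 : k < n
    · rw [if_pos h1, if_neg (by omega), if_pos (by omega), add_zero]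
    · by_cases h2 : k = n
      · subst h2
        rw [if_neg h1, if_pos rfl, if_pos (by omega), zero_add]
      · rw [if_neg h1, if_neg (by omega : ¬ n = k), if_neg (by omega), add_zero]

theorem sk_deg_lt_iff (x : R) (n : ℕ) :
    S.deg x < (n : WithBot ℕ) ↔ ∀ k, S.coeff x k ≠ 0 → k < n := by
  constructor
  · intro h k hk
    have hle : (k : WithBot ℕ) ≤ S.deg x := Finset.le_max (Finsupp.mem_support_iff.mpr hk)
    exact_mod_cast hle.trans_lt h
  · intro h
    rcases Finset.eq_empty_or_nonempty (S.coeff x).support with he | hne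
    · show (S.coeff x).support.max < (n : WithBot ℕ)
      rw [he, Finset.max_empty]
      exact WithBot.bot_lt_coe n
    · obtain ⟨d, hd⟩ := Finset.max_of_nonempty hne
      show (S.coeff x).support.max < (n : WithBot ℕ)
      rw [hd]
      exact WithBot.coe_lt_coe.mpr (h d (Finsupp.mem_support_iff.mp (Finset.mem_of_max hd)))

theorem sk_deg_cform_lt (b : ℕ → D) {n N : ℕ} (h : n ≤ N) :
    S.deg (skCform S b n) < (N : WithBot ℕ) := by
  refine (sk_deg_lt_iff S _ N).mpr fun k hk => ?_
  rw [sk_coeff_cform] at hk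
  by_contra hN
  rw [if_neg (by omega)] at hk
  exact hk rfl

theorem sk_cform_eq_of_deg_lt {x : R} {n : ℕ} (h : S.deg x < (n : WithBot ℕ)) :
    skCform S (fun k => S.coeff x k) n = x := by
  apply sk_coeff_inj S
  ext k
  rw [sk_coeff_cform]
  by_cases hk : k < n
  · rw [if_pos hk]
  · rw [if_neg hk]
    rcases eq_or_ne (S.coeff x k) 0 with h0 | h0
    · exact h0.symm
    · exact absurd ((sk_deg_lt_iff S x n).mp h k h0) hk

theorem sk_cform_ext {b b' : ℕ → D} {n : ℕ} (h : ∀ k, k < n → b k = b' k) :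
    skCform S b n = skCform S b' n :=
  Finset.sum_congr rfl fun i hi => by rw [h i (Finset.mem_range.mp hi)]

theorem sk_cform_pad {b : ℕ → D} {n N : ℕ} (h : n ≤ N) (h0 : ∀ k, n ≤ k → b k = 0) :
    skCform S b n = skCform S b N :=
  Finset.sum_subset (Finset.range_subset_range.mpr h) fun i _ hni => by
    rw [h0 i (by simpa using hni), map_zero, zero_mul]

theorem sk_cform_sub (b b' : ℕ → D) (n : ℕ) :
    skCform S b n - skCform S b' n = skCform S (fun k => b k - b' k) n := by
  simp only [skCform, ← Finset.sum_sub_distrib, ← sub_mul, ← map_sub]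

theorem sk_cform_sum {ι' : Type} (s : Finset ι') (b : ι' → ℕ → D) (n : ℕ) :
    ∑ j ∈ s, skCform S (b j) n = skCform S (fun k => ∑ j ∈ s, b j k) n := by
  simp only [skCform]
  rw [Finset.sum_comm]
  exact Finset.sum_congr rfl fun k _ => by rw [map_sum, Finset.sum_mul]

theorem sk_iota_mul_cform (e : D) (b : ℕ → D) (n : ℕ) :
    S.ι e * skCform S b n = skCform S (fun k => e * b k) n := by
  simp only [skCform, Finset.mul_sum]
  exact Finset.sum_congr rfl fun k _ => by rw [← mul_assoc, ← map_mul]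

theorem sk_t_pow_eq_cform (k : ℕ) :
    S.t ^ k = skCform S (fun i => if i = k then 1 else 0) (k + 1) := by
  have h : ∀ i, S.ι (if i = k then (1 : D) else 0) * S.t ^ i
      = if i = k then S.ι 1 * S.t ^ i else 0 := fun i => by split_ifs <;> simp
  rw [skCform, Finset.sum_congr rfl fun i _ => h i, Finset.sum_ite_eq',
    if_pos (Finset.mem_range.mpr (by omega)), map_one, one_mul]

theorem sk_t_pow_mul_iota (hδadd : ∀ x y : D, δ (x + y) = δ x + δ y) (j : ℕ) (b : D) :
    S.t ^ j * S.ι b = skCform S (fun i => Delta σ δ j i b) (j + 1) := by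
  induction j with
  | zero => simp [skCform, Delta]
  | succ j ih =>
    have h1 : S.t ^ (j + 1) * S.ι b = S.t * (S.t ^ j * S.ι b) := by
      rw [pow_succ', mul_assoc]
    have hterm : ∀ i, S.t * (S.ι (Delta σ δ j i b) * S.t ^ i)
        = S.ι (σ (Delta σ δ j i b)) * S.t ^ (i + 1) + S.ι (δ (Delta σ δ j i b)) * S.t ^ i := by
      intro i
      rw [← mul_assoc, S.t_mul, add_mul, mul_assoc, ← pow_succ']
    have hsplit : ∀ i, S.ι (Delta σ δ (j + 1) (i + 1) b) * S.t ^ (i + 1)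
        = S.ι (δ (Delta σ δ j (i + 1) b)) * S.t ^ (i + 1)
          + S.ι (σ (Delta σ δ j i b)) * S.t ^ (i + 1) := by
      intro i
      show S.ι (δ (Delta σ δ j (i + 1) b) + σ (Delta σ δ j i b)) * S.t ^ (i + 1) = _
      rw [map_add, add_mul]
    rw [h1, ih, skCform, Finset.mul_sum, Finset.sum_congr rfl fun i _ => hterm i,
      Finset.sum_add_distrib]
    rw [skCform, Finset.sum_range_succ' _ (j + 1), Finset.sum_congr rfl fun i _ => hsplit i,
      Finset.sum_add_distrib]
    have hz : ∑ i ∈ Finset.range (j + 1), S.ι (δ (Delta σ δ j (i + 1) b)) * S.t ^ (i + 1)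
        = ∑ i ∈ Finset.range j, S.ι (δ (Delta σ δ j (i + 1) b)) * S.t ^ (i + 1) := by
      rw [Finset.sum_range_succ, skDelta_zero_of_lt hδadd j (j + 1) (by omega) b,
        deltaZero hδadd, map_zero, zero_mul, add_zero]
    have hz2 : ∑ i ∈ Finset.range (j + 1), S.ι (δ (Delta σ δ j i b)) * S.t ^ i
        = (∑ i ∈ Finset.range j, S.ι (δ (Delta σ δ j (i + 1) b)) * S.t ^ (i + 1))
          + S.ι (δ (Delta σ δ j 0 b)) * S.t ^ 0 :=
      Finset.sum_range_succ' _ j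
    rw [hz, hz2]
    show _ = _ + _ + S.ι (δ (Delta σ δ j 0 b)) * S.t ^ 0
    abel

theorem sk_t_pow_mul_cform (hδadd : ∀ x y : D, δ (x + y) = δ x + δ y) (i : ℕ) (b : ℕ → D)
    (n : ℕ) :
    S.t ^ i * skCform S b n = skCform S
      (fun k => ∑ j ∈ Finset.range n, ∑ l ∈ Finset.range (i + 1),
        if l + j = k then Delta σ δ i l (b j) else 0) (i + n) := by
  have hL : ∀ j, S.t ^ i * (S.ι (b j) * S.t ^ j)
      = ∑ l ∈ Finset.range (i + 1), S.ι (Delta σ δ i l (b j)) * S.t ^ (l + j) := by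
    intro j
    rw [← mul_assoc, sk_t_pow_mul_iota S hδadd, skCform, Finset.sum_mul]
    exact Finset.sum_congr rfl fun l _ => by rw [mul_assoc, ← pow_add]
  have hR : ∀ k, S.ι (∑ j ∈ Finset.range n, ∑ l ∈ Finset.range (i + 1),
        if l + j = k then Delta σ δ i l (b j) else 0) * S.t ^ k
      = ∑ j ∈ Finset.range n, ∑ l ∈ Finset.range (i + 1),
        (if l + j = k then S.ι (Delta σ δ i l (b j)) * S.t ^ k else 0) := by
    intro k
    rw [map_sum, Finset.sum_mul]
    refine Finset.sum_congr rfl fun j _ => ?_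
    rw [map_sum, Finset.sum_mul]
    exact Finset.sum_congr rfl fun l _ => by split_ifs <;> simp
  rw [skCform, Finset.mul_sum, Finset.sum_congr rfl fun j _ => hL j]
  conv_rhs => rw [skCform]
  rw [Finset.sum_congr rfl fun k _ => hR k]
  rw [show (∑ k ∈ Finset.range (i + n), ∑ j ∈ Finset.range n, ∑ l ∈ Finset.range (i + 1),
        if l + j = k then S.ι (Delta σ δ i l (b j)) * S.t ^ k else 0)
      = ∑ j ∈ Finset.range n, ∑ l ∈ Finset.range (i + 1), ∑ k ∈ Finset.range (i + n),
        if l + j = k then S.ι (Delta σ δ i l (b j)) * S.t ^ k else 0 from by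
    rw [Finset.sum_comm]
    exact Finset.sum_congr rfl fun j _ => Finset.sum_comm]
  refine Finset.sum_congr rfl fun j hj => ?_
  refine Finset.sum_congr rfl fun l hl => ?_
  rw [Finset.sum_ite_eq, if_pos (Finset.mem_range.mpr ?_)]
  have := Finset.mem_range.mp hj
  have := Finset.mem_range.mp hl
  omega

theorem sk_cform_one (b : ℕ → D) : skCform S b 1 = S.ι (b 0) := by
  simp [skCform]

end SkAux

section SkAux2
variable {D : Type} [DivisionRing D] {σ : D →+* D} {δ : D → D}
variable {R : Type} [Ring R] (S : SkewPolyData D σ δ R)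

theorem sk_cform_mul (b : ℕ → D) (n : ℕ) (y : R) :
    skCform S b n * y = ∑ i ∈ Finset.range n, S.ι (b i) * (S.t ^ i * y) := by
  simp only [skCform, Finset.sum_mul, mul_assoc]

end SkAux2
theorem statement_13 (D R : Type) [DivisionRing D] [Ring R]
    (σ : D →+* D) (hσinj : Function.Injective ⇑σ)
    (δ : D → D) (hδadd : ∀ x y : D, δ (x + y) = δ x + δ y)
    (hδleib : ∀ x y : D, δ (x * y) = σ x * δ y + δ x * y)
    (S : SkewPolyData D σ δ R)
    (m : ℕ) (hm : 1 < m) (a : ℕ → D) (f : R)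
    (hf : f = S.t ^ m - ∑ i ∈ Finset.range m, S.ι (a i) * S.t ^ i)
    (c : D) :
    ((∃ c' : D, f * S.ι c = S.ι c' * f) ↔ S.ι c ∈ S.NucR f) ∧
    ((∃ c' : D, f * S.ι c = S.ι c' * f) ↔
      ∀ k : ℕ, k < m →
        (⇑σ)^[m] c * a k =
          (∑ j ∈ Finset.Ico k m, a j * Delta σ δ j k c) - Delta σ δ m k c) := by
  set Ff : ℕ → D := fun k => (if k = m then (1 : D) else 0) - (if k < m then a k else 0)
    with hFf
  have hfc : f = skCform S Ff (m + 1) := by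
    rw [hf, sk_t_pow_eq_cform]
    have h1 : (∑ i ∈ Finset.range m, S.ι (a i) * S.t ^ i)
        = skCform S (fun k => if k < m then a k else 0) (m + 1) := by
      rw [show (∑ i ∈ Finset.range m, S.ι (a i) * S.t ^ i) = skCform S a m from rfl,
        sk_cform_ext S (show ∀ k, k < m → a k = if k < m then a k else 0
          from fun k hk => (if_pos hk).symm)]
      exact sk_cform_pad S (by omega) fun k hk => if_neg (by omega)
    rw [h1, sk_cform_sub, hFf]
  have hFfm : Ff m = 1 := by rw [hFf]; simp
  have hcoefff : ∀ k, S.coeff f k = if k < m + 1 then Ff k else 0 := fun k => by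
    rw [hfc, sk_coeff_cform]
  have f_ne : f ≠ 0 := by
    intro h0
    have h := hcoefff m
    rw [h0, sk_coeff_zero, if_pos (by omega), hFfm] at h
    simpa using h
  have hdegf : S.deg f = (m : WithBot ℕ) := by
    apply le_antisymm
    · show (S.coeff f).support.max ≤ (m : WithBot ℕ)
      refine Finset.max_le fun k hk => ?_
      have hne := Finsupp.mem_support_iff.mp hk
      rw [hcoefff] at hne
      have hkm : k ≤ m := by
        by_contra h'
        rw [if_neg (by omega)] at hne
        exact hne rfl
      exact WithBot.coe_le_coe.mpr hkm
    · show (m : WithBot ℕ) ≤ (S.coeff f).support.max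
      have hmem : m ∈ (S.coeff f).support := Finsupp.mem_support_iff.mpr (by
        rw [hcoefff, if_pos (by omega), hFfm]
        exact one_ne_zero)
      exact Finset.le_max hmem
  have r1 : ∀ x : R, ∃ q, x = q * f + S.rmod x f := fun x => (S.rmod_spec x f f_ne).1
  have rdeg : ∀ x : R, S.deg (S.rmod x f) < (m : WithBot ℕ) := fun x => by
    have h := (S.rmod_spec x f f_ne).2
    rw [← hdegf]
    exact h
  have hσ1 : ∀ d : ℕ, (⇑σ)^[d] (1 : D) = 1 := fun d => Function.iterate_fixed (map_one σ) d
  -- key coefficient lemma for products with f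
  have hd1 : ∀ (Q : R) (d : ℕ), (∀ k, d < k → S.coeff Q k = 0) →
      S.coeff (Q * f) (d + m) = S.coeff Q d := by
    intro Q d hsup
    have hdegQ : S.deg Q < ((d + 1 : ℕ) : WithBot ℕ) :=
      (sk_deg_lt_iff S Q (d + 1)).mpr fun k hk => by
        by_contra hc
        exact hk (hsup k (by omega))
    have hQ : Q = skCform S (fun k => S.coeff Q k) (d + 1) := (sk_cform_eq_of_deg_lt S hdegQ).symm
    have hexp : Q * f = skCform S (fun k => ∑ i ∈ Finset.range (d + 1),
        S.coeff Q i * (∑ j ∈ Finset.range (m + 1), ∑ l ∈ Finset.range (i + 1),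
          if l + j = k then Delta σ δ i l (Ff j) else 0)) (d + m + 1) := by
      conv_lhs => rw [hQ, hfc]
      rw [sk_cform_mul]
      have hterm : ∀ i ∈ Finset.range (d + 1),
          S.ι (S.coeff Q i) * (S.t ^ i * skCform S Ff (m + 1))
          = skCform S (fun k => S.coeff Q i * (∑ j ∈ Finset.range (m + 1),
              ∑ l ∈ Finset.range (i + 1), if l + j = k then Delta σ δ i l (Ff j) else 0))
              (d + m + 1) := by
        intro i hi
        rw [sk_t_pow_mul_cform S hδadd, sk_iota_mul_cform]
        refine sk_cform_pad S (by have := Finset.mem_range.mp hi; omega) fun k hk => ?_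
        exact mul_eq_zero_of_right _ (Finset.sum_eq_zero fun j hj =>
          Finset.sum_eq_zero fun l hl => if_neg (by
            have := Finset.mem_range.mp hj
            have := Finset.mem_range.mp hl
            omega))
      rw [Finset.sum_congr rfl hterm, sk_cform_sum]
    have hval : (∑ i ∈ Finset.range (d + 1),
        S.coeff Q i * (∑ j ∈ Finset.range (m + 1), ∑ l ∈ Finset.range (i + 1),
          if l + j = d + m then Delta σ δ i l (Ff j) else 0)) = S.coeff Q d := by
      have hz : ∑ i ∈ Finset.range d,
          S.coeff Q i * (∑ j ∈ Finset.range (m + 1), ∑ l ∈ Finset.range (i + 1),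
            if l + j = d + m then Delta σ δ i l (Ff j) else 0) = 0 :=
        Finset.sum_eq_zero fun i hi => mul_eq_zero_of_right _ (Finset.sum_eq_zero fun j hj =>
          Finset.sum_eq_zero fun l hl => if_neg (by
            have := Finset.mem_range.mp hi
            have := Finset.mem_range.mp hj
            have := Finset.mem_range.mp hl
            omega))
      have h0 : ∑ j ∈ Finset.range m, (∑ l ∈ Finset.range (d + 1),
          if l + j = d + m then Delta σ δ d l (Ff j) else 0) = 0 :=
        Finset.sum_eq_zero fun j hj => Finset.sum_eq_zero fun l hl => if_neg (by
          have := Finset.mem_range.mp hj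
          have := Finset.mem_range.mp hl
          omega)
      have hitec : ∀ l : ℕ, (if l + m = d + m then Delta σ δ d l (Ff m) else 0)
          = if l = d then Delta σ δ d l (Ff m) else 0 := fun l =>
        if_congr (by omega) rfl rfl
      have h1 : (∑ l ∈ Finset.range (d + 1),
          if l + m = d + m then Delta σ δ d l (Ff m) else 0) = 1 := by
        rw [Finset.sum_congr rfl fun l _ => hitec l,
          Finset.sum_ite_eq', if_pos (Finset.mem_range.mpr (by omega)), hFfm,
          skDelta_diag hδadd, hσ1]
      rw [Finset.sum_range_succ, hz, zero_add, Finset.sum_range_succ, h0, zero_add, h1, mul_one]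
    rw [hexp, sk_coeff_cform, if_pos (by omega)]
    exact hval
  -- uniqueness of division with remainder
  have hcancel : ∀ q₁ r₁ q₂ r₂ : R, q₁ * f + r₁ = q₂ * f + r₂ →
      S.deg r₁ < (m : WithBot ℕ) → S.deg r₂ < (m : WithBot ℕ) → q₁ = q₂ ∧ r₁ = r₂ := by
    intro q₁ r₁ q₂ r₂ h hr₁ hr₂
    have hq : q₁ = q₂ := by
      by_contra hne
      have hQ : q₁ - q₂ ≠ 0 := sub_ne_zero_of_ne hne
      have hQc : S.coeff (q₁ - q₂) ≠ 0 := fun h0 => hQ (by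
        apply sk_coeff_inj S
        rw [h0, sk_coeff_zero])
      have hsupp : (S.coeff (q₁ - q₂)).support.Nonempty :=
        Finset.nonempty_of_ne_empty fun h0 => hQc (Finsupp.support_eq_empty.mp h0)
      set d := (S.coeff (q₁ - q₂)).support.max' hsupp with hd
      have hsup : ∀ k, d < k → S.coeff (q₁ - q₂) k = 0 := by
        intro k hk
        by_contra h0
        exact absurd (Finset.le_max' _ k (Finsupp.mem_support_iff.mpr h0)) (by omega)
      have hco := hd1 (q₁ - q₂) d hsup
      have hdm : S.coeff (q₁ - q₂) d ≠ 0 :=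
        Finsupp.mem_support_iff.mp (Finset.max'_mem _ hsupp)
      have hsub : (q₁ - q₂) * f = r₂ - r₁ := by
        rw [sub_mul, sub_eq_sub_iff_add_eq_add, h, add_comm]
      have hz : S.coeff ((q₁ - q₂) * f) (d + m) = 0 := by
        rw [hsub, sk_coeff_sub, Finsupp.sub_apply]
        have h2 : S.coeff r₂ (d + m) = 0 := by
          by_contra h0
          have := (sk_deg_lt_iff S r₂ m).mp hr₂ _ h0
          omega
        have h1 : S.coeff r₁ (d + m) = 0 := by
          by_contra h0
          have := (sk_deg_lt_iff S r₁ m).mp hr₁ _ h0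
          omega
        rw [h1, h2, sub_zero]
      rw [hco] at hz
      exact hdm hz
    refine ⟨hq, ?_⟩
    rw [hq] at h
    exact add_left_cancel h
  have hr3 : ∀ x q r : R, x = q * f + r → S.deg r < (m : WithBot ℕ) → S.rmod x f = r := by
    intro x q r h hr
    obtain ⟨q', hq'⟩ := r1 x
    exact (hcancel q' (S.rmod x f) q r (by rw [← hq', ← h]) (rdeg x) hr).2
  have hr2 : ∀ x q : R, S.rmod (x + q * f) f = S.rmod x f := by
    intro x q
    obtain ⟨q', hq'⟩ := r1 x
    refine hr3 (x + q * f) (q' + q) (S.rmod x f) ?_ (rdeg x)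
    conv_lhs => rw [hq']
    rw [add_mul]
    abel
  have hr4 : ∀ x : R, S.deg x < (m : WithBot ℕ) → S.rmod x f = x := fun x hx =>
    hr3 x 0 x (by rw [zero_mul, zero_add]) hx
  -- the two canonical expansions
  have hfι : ∀ e : D, f * S.ι e = skCform S
      (fun k => Delta σ δ m k e - ∑ j ∈ Finset.range m, a j * Delta σ δ j k e) (m + 1) := by
    intro e
    rw [hf, sub_mul, Finset.sum_mul, sk_t_pow_mul_iota S hδadd]
    have hterm : ∀ j ∈ Finset.range m, S.ι (a j) * S.t ^ j * S.ι e
        = skCform S (fun k => a j * Delta σ δ j k e) (m + 1) := by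
      intro j hj
      have hjm := Finset.mem_range.mp hj
      rw [mul_assoc, sk_t_pow_mul_iota S hδadd, sk_iota_mul_cform]
      refine sk_cform_pad S (by omega) fun k hk => ?_
      exact mul_eq_zero_of_right _ (skDelta_zero_of_lt hδadd j k (by omega) e)
    rw [Finset.sum_congr rfl hterm, sk_cform_sum, sk_cform_sub]
  have hιf : ∀ e : D, S.ι e * f = skCform S
      (fun k => (if k = m then e else 0) - (if k < m then e * a k else 0)) (m + 1) := by
    intro e
    rw [hfc, sk_iota_mul_cform]
    refine sk_cform_ext S fun k hk => ?_
    simp only [hFf, mul_sub, mul_ite, mul_one, mul_zero]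
  have sum_split : ∀ k, k < m → ∑ j ∈ Finset.range m, a j * Delta σ δ j k c
      = ∑ j ∈ Finset.Ico k m, a j * Delta σ δ j k c := by
    intro k hk
    rw [← Finset.sum_range_add_sum_Ico _ (le_of_lt hk),
      Finset.sum_eq_zero (fun j hj => mul_eq_zero_of_right _
        (skDelta_zero_of_lt hδadd j k (Finset.mem_range.mp hj) c)), zero_add]
  have halg : ∀ X Y Z : D, X - Y = 0 - Z ↔ Z = Y - X := by
    intro X Y Z
    constructor
    · intro h
      rw [zero_sub] at h
      rw [← neg_sub X Y, h, neg_neg]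
    · intro h
      rw [zero_sub, h, neg_sub]
  have h13 : (∃ c' : D, f * S.ι c = S.ι c' * f) ↔
      (∀ k, k < m → (⇑σ)^[m] c * a k
        = (∑ j ∈ Finset.Ico k m, a j * Delta σ δ j k c) - Delta σ δ m k c) := by
    constructor
    · rintro ⟨c', hc'⟩
      rw [hfι c, hιf c'] at hc'
      have hco : ∀ k, (if k < m + 1 then
            Delta σ δ m k c - ∑ j ∈ Finset.range m, a j * Delta σ δ j k c else 0)
          = (if k < m + 1 then
            (if k = m then c' else 0) - (if k < m then c' * a k else 0) else 0) := by
        intro k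
        have h := congrArg (fun x => S.coeff x k) hc'
        simpa only [sk_coeff_cform] using h
      have hcm : (⇑σ)^[m] c = c' := by
        have h := hco m
        rw [if_pos (by omega), if_pos (by omega), if_pos rfl, if_neg (lt_irrefl m),
          Finset.sum_eq_zero (fun j hj => mul_eq_zero_of_right _
            (skDelta_zero_of_lt hδadd j m (Finset.mem_range.mp hj) c)),
          sub_zero, sub_zero, skDelta_diag hδadd] at h
        exact h
      intro k hk
      have h := hco k
      rw [if_pos (by omega), if_pos (by omega), if_neg (by omega), if_pos hk, ← hcm] at h
      rw [← sum_split k hk]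
      exact (halg _ _ _).mp h
    · intro h3
      refine ⟨(⇑σ)^[m] c, ?_⟩
      rw [hfι c, hιf ((⇑σ)^[m] c)]
      refine sk_cform_ext S fun k hk => ?_
      by_cases hkm : k = m
      · subst hkm
        rw [if_pos rfl, if_neg (lt_irrefl k),
          Finset.sum_eq_zero (fun j hj => mul_eq_zero_of_right _
            (skDelta_zero_of_lt hδadd j k (Finset.mem_range.mp hj) c)),
          sub_zero, sub_zero, skDelta_diag hδadd]
      · have hklt : k < m := by omega
        rw [if_neg hkm, if_pos hklt]
        have h := h3 k hklt
        rw [← sum_split k hklt] at h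
        exact (halg _ _ _).mpr h
  have hdegι : ∀ e : D, S.deg (S.ι e) < (m : WithBot ℕ) := by
    intro e
    rw [show S.ι e = skCform S (fun _ => e) 1 from (sk_cform_one S (fun _ => e)).symm]
    exact sk_deg_cform_lt S _ (by omega)
  have h12 : (∃ c' : D, f * S.ι c = S.ι c' * f) ↔ S.ι c ∈ S.NucR f := by
    constructor
    · rintro ⟨c', hc'⟩
      refine ⟨?_, ?_⟩
      · show S.deg (S.ι c) < S.deg f
        rw [hdegf]
        exact hdegι c
      · intro A hA B hB
        show S.rmod (S.rmod (A * B) f * S.ι c) f = S.rmod (A * S.rmod (B * S.ι c) f) f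
        obtain ⟨q₁, hq₁⟩ := r1 (A * B)
        obtain ⟨q₂, hq₂⟩ := r1 (B * S.ι c)
        have e₁ : S.rmod (A * B) f * S.ι c = A * B * S.ι c + (-(q₁ * S.ι c')) * f := by
          have h' : S.rmod (A * B) f = A * B - q₁ * f := by
            rw [eq_sub_iff_add_eq, add_comm]
            exact hq₁.symm
          rw [h', sub_mul, neg_mul, mul_assoc q₁, hc', mul_assoc q₁, ← sub_eq_add_neg]
        have e₂ : A * S.rmod (B * S.ι c) f = A * B * S.ι c + (-(A * q₂)) * f := by
          have h' : S.rmod (B * S.ι c) f = B * S.ι c - q₂ * f := by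
            rw [eq_sub_iff_add_eq, add_comm]
            exact hq₂.symm
          rw [h', mul_sub, ← mul_assoc A B, ← mul_assoc A q₂, neg_mul, ← sub_eq_add_neg]
        rw [e₁, e₂, hr2, hr2]
    · rintro ⟨hcarr, hassoc⟩
      have hm1 : m - 1 + 1 = m := by omega
      have hA : S.t ^ (m - 1) ∈ S.carr f := by
        show S.deg (S.t ^ (m - 1)) < S.deg f
        rw [hdegf, sk_t_pow_eq_cform]
        exact sk_deg_cform_lt S _ (by omega)
      have hB : S.t ∈ S.carr f := by
        show S.deg S.t < S.deg f
        rw [hdegf, ← pow_one S.t, sk_t_pow_eq_cform]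
        exact sk_deg_cform_lt S _ (by omega)
      have h := hassoc (S.t ^ (m - 1)) hA S.t hB
      simp only [SkewPolyData.pmul] at h
      have hf₀ : S.rmod (S.t ^ (m - 1) * S.t) f = skCform S a m := by
        rw [← pow_succ, hm1]
        refine hr3 (S.t ^ m) 1 (skCform S a m) ?_ (sk_deg_cform_lt S _ le_rfl)
        rw [one_mul, hf]
        show S.t ^ m = S.t ^ m - skCform S a m + skCform S a m
        rw [sub_add_cancel]
      have htc : S.rmod (S.t * S.ι c) f = S.t * S.ι c := by
        refine hr4 _ ?_
        rw [← pow_one S.t, sk_t_pow_mul_iota S hδadd]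
        exact sk_deg_cform_lt S _ (by omega)
      rw [hf₀, htc, ← mul_assoc, ← pow_succ, hm1] at h
      obtain ⟨q, hq⟩ := r1 (S.t ^ m * S.ι c)
      obtain ⟨q', hq'⟩ := r1 (skCform S a m * S.ι c)
      have hQf : f * S.ι c = (q - q') * f := by
        have hsplit : f * S.ι c = S.t ^ m * S.ι c - skCform S a m * S.ι c := by
          rw [hf, sub_mul]
          rfl
        rw [hsplit, hq, hq', h, sub_mul]
        abel
      by_cases hQ0 : q - q' = 0
      · exact ⟨0, by rw [map_zero, zero_mul, hQf, hQ0, zero_mul]⟩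
      · have hQc : S.coeff (q - q') ≠ 0 := fun h0 =>
          hQ0 (sk_coeff_inj S (by rw [h0, sk_coeff_zero]))
        have hsupp : (S.coeff (q - q')).support.Nonempty :=
          Finset.nonempty_of_ne_empty fun h0 => hQc (Finsupp.support_eq_empty.mp h0)
        set d := (S.coeff (q - q')).support.max' hsupp with hd
        have hsup : ∀ k, d < k → S.coeff (q - q') k = 0 := by
          intro k hk
          by_contra h0
          exact absurd (Finset.le_max' _ k (Finsupp.mem_support_iff.mpr h0)) (by omega)
        have hco := hd1 (q - q') d hsup
        have hdm : S.coeff (q - q') d ≠ 0 :=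
          Finsupp.mem_support_iff.mp (Finset.max'_mem _ hsupp)
        have hd0 : d = 0 := by
          by_contra hdne
          have hz : S.coeff ((q - q') * f) (d + m) = 0 := by
            rw [← hQf, hfι c, sk_coeff_cform, if_neg (by omega)]
          rw [hco] at hz
          exact hdm hz
        have hdeg : S.deg (q - q') < ((1 : ℕ) : WithBot ℕ) :=
          (sk_deg_lt_iff S _ 1).mpr fun k hk => by
            by_contra hk1
            exact hk (hsup k (by omega))
        have hQconst : q - q' = S.ι (S.coeff (q - q') 0) := by
          have h' := sk_cform_eq_of_deg_lt S hdeg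
          rw [sk_cform_one] at h'
          exact h'.symm
        exact ⟨S.coeff (q - q') 0, by rw [hQf, ← hQconst]⟩
  exact ⟨h12, h13⟩
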